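/- For every integer s ≥ 1: if a finite simple graph G contains no induced K_{s,s} and V(G) can be partitioned (in part) into N pairwise disjoint singletons {v_1}, ..., {v_N} with N ≥ α^s · t^(s−1), G is K_t-free, then among v_1, ..., v_N there are α pairwise non-adjacent vertices. (The base case r = 1 of the anticomplete-families lemma, equivalent to the Erdős–Hajnal property for K_{s,s}.) -/
import Mathlib


/-- `G` has no induced subgraph isomorphic to the complete bipartite graph `K_{s,s}`. -/
def KssFree {V : Type*} (G : SimpleGraph V) (s : ℕ) : Prop :=
  ¬ ∃ A B : Finset V, A.card = s ∧ B.card = s ∧ Disjoint A B ∧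
      (∀ a ∈ A, ∀ b ∈ B, G.Adj a b) ∧
      (∀ a ∈ A, ∀ a' ∈ A, ¬ G.Adj a a') ∧
      (∀ b ∈ B, ∀ b' ∈ B, ¬ G.Adj b b')

/-- `choose (t-1+k) k ≤ t^k`. -/
lemma stmt19_choose_le (t : ℕ) (ht : 1 ≤ t) : ∀ k, Nat.choose (t - 1 + k) k ≤ t ^ k := by
  intro k
  induction k with
  | zero => simp
  | succ k ih =>
    have key := Nat.add_one_mul_choose_eq (t - 1 + k) k
    have h1 : Nat.succ (t - 1 + k) = t + k := by omega
    have h2 : t - 1 + (k + 1) = t + k := by omega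
    rw [h2]
    have h3 : Nat.choose (t + k) (k + 1) * (k + 1) = (t + k) * Nat.choose (t - 1 + k) k := by
      rw [← h1, ← key]
    have h4 : (t + k) * Nat.choose (t - 1 + k) k ≤ t ^ (k + 1) * (k + 1) := by
      calc (t + k) * Nat.choose (t - 1 + k) k
          ≤ (t * (k + 1)) * Nat.choose (t - 1 + k) k := by
            apply Nat.mul_le_mul_right
            nlinarith
        _ ≤ (t * (k + 1)) * t ^ k := Nat.mul_le_mul_left _ ih
        _ = t ^ (k + 1) * (k + 1) := by ring
    have h5 : Nat.choose (t + k) (k + 1) * (k + 1) ≤ t ^ (k + 1) * (k + 1) := by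
      rw [h3]; exact h4
    exact Nat.le_of_mul_le_mul_right h5 (by omega)

/-- Ramsey-type lemma: a set with no `q`-clique and of size at least
`choose (p+q-2) (p-1)` contains a stable set of size `p`. -/
lemma stmt19_ramsey {V : Type*} (G : SimpleGraph V) :
    ∀ (n p q : ℕ) (U : Finset V), p + q ≤ n →
    Nat.choose (p + q - 2) (p - 1) ≤ U.card →
    (¬ ∃ K : Finset V, K ⊆ U ∧ G.IsNClique q K) →
    ∃ A : Finset V, A ⊆ U ∧ A.card = p ∧ ∀ x ∈ A, ∀ y ∈ A, ¬ G.Adj x y := by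
  classical
  intro n
  induction n with
  | zero =>
    intro p q U hpq _ hcl
    have hq : q = 0 := by omega
    exact absurd ⟨∅, Finset.empty_subset _, by simp [hq, SimpleGraph.IsNClique]⟩ hcl
  | succ n ih =>
    intro p q U hpq hcard hcl
    rcases Nat.eq_zero_or_pos p with hp0 | hp1
    · exact ⟨∅, Finset.empty_subset _, by simp [hp0], by simp⟩
    rcases Nat.eq_zero_or_pos q with hq0 | hq1
    · exact absurd ⟨∅, Finset.empty_subset _, by simp [hq0, SimpleGraph.IsNClique]⟩ hcl
    -- U is nonempty
    have hUpos : 0 < U.card := by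
      have : 0 < Nat.choose (p + q - 2) (p - 1) := Nat.choose_pos (by omega)
      omega
    obtain ⟨x, hx⟩ := Finset.card_pos.mp hUpos
    rcases Nat.lt_or_ge p 2 with hp | hp
    · -- p = 1
      have hp1' : p = 1 := by omega
      refine ⟨{x}, Finset.singleton_subset_iff.mpr hx, by simp [hp1'], ?_⟩
      intro a ha b hb
      simp only [Finset.mem_singleton] at ha hb
      subst ha; subst hb; exact G.irrefl
    rcases Nat.lt_or_ge q 2 with hq | hq
    · -- q = 1 : {x} is a 1-clique
      have hq1' : q = 1 := by omega
      refine absurd ⟨{x}, Finset.singleton_subset_iff.mpr hx, ?_⟩ hcl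
      constructor
      · simp [SimpleGraph.isClique_singleton]
      · simp [hq1']
    -- main case : p, q ≥ 2
    obtain ⟨p2, rfl⟩ : ∃ p2, p = p2 + 2 := ⟨p - 2, by omega⟩
    obtain ⟨q2, rfl⟩ : ∃ q2, q = q2 + 2 := ⟨q - 2, by omega⟩
    set U1 := (U.erase x).filter (fun y => G.Adj x y) with hU1
    set U2 := (U.erase x).filter (fun y => ¬ G.Adj x y) with hU2
    have hsplit : U1.card + U2.card = (U.erase x).card :=
      Finset.card_filter_add_card_filter_not _
    have herase : (U.erase x).card = U.card - 1 := Finset.card_erase_of_mem hx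
    have hpas : Nat.choose (p2 + 2 + (q2 + 2) - 2) (p2 + 2 - 1)
        = Nat.choose (p2 + q2 + 1) p2 + Nat.choose (p2 + q2 + 1) (p2 + 1) := by
      have h : p2 + 2 + (q2 + 2) - 2 = (p2 + q2 + 1) + 1 := by omega
      have h' : p2 + 2 - 1 = p2 + 1 := by omega
      rw [h, h']
      exact Nat.choose_succ_succ _ _
    by_cases hcase : Nat.choose (p2 + q2 + 1) (p2 + 1) ≤ U1.card
    · -- recurse in the neighborhood with q-1
      have hcl1 : ¬ ∃ K : Finset V, K ⊆ U1 ∧ G.IsNClique (q2 + 1) K := by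
        rintro ⟨K, hKU, hK⟩
        apply hcl
        refine ⟨insert x K, ?_, ?_⟩
        · intro y hy
          rcases Finset.mem_insert.mp hy with rfl | hy
          · exact hx
          · exact (Finset.erase_subset _ _) ((Finset.filter_subset _ _) (hKU hy))
        · exact hK.insert (fun b hb => (Finset.mem_filter.mp (hKU hb)).2)
      have := ih (p2 + 2) (q2 + 1) U1 (by omega) (by
        have h : p2 + 2 + (q2 + 1) - 2 = p2 + q2 + 1 := by omega
        have h' : p2 + 2 - 1 = p2 + 1 := by omega
        rw [h, h']; exact hcase) hcl1
      obtain ⟨A, hAU, hAcard, hAstb⟩ := this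
      exact ⟨A, hAU.trans ((Finset.filter_subset _ _).trans (Finset.erase_subset _ _)), hAcard, hAstb⟩
    · -- recurse in the non-neighborhood with p-1
      have hU2card : Nat.choose (p2 + q2 + 1) p2 ≤ U2.card := by
        have := hcard
        rw [hpas] at this
        omega
      have hcl2 : ¬ ∃ K : Finset V, K ⊆ U2 ∧ G.IsNClique (q2 + 2) K := by
        rintro ⟨K, hKU, hK⟩
        exact hcl ⟨K, hKU.trans ((Finset.filter_subset _ _).trans (Finset.erase_subset _ _)), hK⟩
      have := ih (p2 + 1) (q2 + 2) U2 (by omega) (by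
        have h : p2 + 1 + (q2 + 2) - 2 = p2 + q2 + 1 := by omega
        have h' : p2 + 1 - 1 = p2 := by omega
        rw [h, h']; exact hU2card) hcl2
      obtain ⟨A, hAU, hAcard, hAstb⟩ := this
      have hxA : x ∉ A := fun hxA => (Finset.mem_erase.mp ((Finset.filter_subset _ _) (hAU hxA))).1 rfl
      refine ⟨insert x A, ?_, ?_, ?_⟩
      · intro y hy
        rcases Finset.mem_insert.mp hy with rfl | hy
        · exact hx
        · exact (Finset.erase_subset _ _) ((Finset.filter_subset _ _) (hAU hy))
      · rw [Finset.card_insert_of_notMem hxA, hAcard]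
      · intro a ha b hb
        by_cases hax : a = x <;> by_cases hbx : b = x
        · subst hax; subst hbx; exact G.irrefl
        · subst hax
          have hbA : b ∈ A := by
            rcases Finset.mem_insert.mp hb with h | h
            · exact absurd h hbx
            · exact h
          exact (Finset.mem_filter.mp (hAU hbA)).2
        · subst hbx
          have haA : a ∈ A := by
            rcases Finset.mem_insert.mp ha with h | h
            · exact absurd h hax
            · exact h
          exact fun h => (Finset.mem_filter.mp (hAU haA)).2 h.symm
        · have haA : a ∈ A := by
            rcases Finset.mem_insert.mp ha with h | h
            · exact absurd h hax
            · exact h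
          have hbA : b ∈ A := by
            rcases Finset.mem_insert.mp hb with h | h
            · exact absurd h hbx
            · exact h
          exact hAstb a haA b hbA

lemma stmt19_sum_choose (n : ℕ) : ∀ s, 1 ≤ s →
    ∑ j ∈ Finset.Icc 1 s, Nat.choose n j ≤ (n + 1) ^ s - 1 := by
  intro s
  induction s with
  | zero => omega
  | succ s ih =>
    intro _
    rcases Nat.eq_zero_or_pos s with rfl | hs
    · simp
    have hins : Finset.Icc 1 (s + 1) = insert (s + 1) (Finset.Icc 1 s) := by
      ext x
      simp only [Finset.mem_Icc, Finset.mem_insert]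
      omega
    rw [hins, Finset.sum_insert (by simp)]
    have h1 : Nat.choose n (s + 1) ≤ n ^ (s + 1) := Nat.choose_le_pow _ _
    have h2 : n ^ (s + 1) ≤ n * (n + 1) ^ s := by
      rw [pow_succ]
      calc n ^ s * n ≤ (n + 1) ^ s * n := Nat.mul_le_mul_right _ (Nat.pow_le_pow_left (by omega) _)
        _ = n * (n + 1) ^ s := by ring
    have h3 : (n + 1) ^ (s + 1) = n * (n + 1) ^ s + (n + 1) ^ s := by
      rw [pow_succ]; ring
    have h4 : 1 ≤ (n + 1) ^ s := Nat.one_le_pow _ _ (by omega)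
    have h5 := ih hs
    omega

theorem stmt19 {V : Type*} (G : SimpleGraph V)
    (s t α N : ℕ) (hs : 1 ≤ s) (ht : 1 ≤ t) (hα : 1 ≤ α) (hN : 1 ≤ N)
    (hKss : KssFree G s)
    (hclique : ¬ ∃ K : Finset V, G.IsNClique t K)
    (v : Fin N → V) (hv : Function.Injective v)
    (hbig : α ^ s * t ^ (s - 1) ≤ N) :
    ∃ S : Finset (Fin N), S.card = α ∧
      ∀ i ∈ S, ∀ j ∈ S, i ≠ j → ¬ G.Adj (v i) (v j) := by
  classical
  set W : Finset V := Finset.univ.image v with hWdef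
  have hWcard : W.card = N := by
    rw [hWdef, Finset.card_image_of_injective _ hv, Finset.card_univ, Fintype.card_fin]
  -- maximal stable subset of W
  obtain ⟨S, hSmem, hSmax'⟩ :=
    Finset.exists_max_image (W.powerset.filter (fun X => ∀ x ∈ X, ∀ y ∈ X, ¬ G.Adj x y))
      Finset.card ⟨∅, by simp⟩
  simp only [Finset.mem_filter, Finset.mem_powerset] at hSmem
  obtain ⟨hSW, hSstb⟩ := hSmem
  have hmax : ∀ X : Finset V, X ⊆ W → (∀ x ∈ X, ∀ y ∈ X, ¬ G.Adj x y) → X.card ≤ S.card := by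
    intro X hXW hX
    apply hSmax'
    simp only [Finset.mem_filter, Finset.mem_powerset]
    exact ⟨hXW, hX⟩
  by_cases hwin : α ≤ S.card
  · -- extract a stable α-set and pull back to indices
    obtain ⟨A, hAS, hAcard⟩ := Finset.exists_subset_card_eq hwin
    refine ⟨Finset.univ.filter (fun i => v i ∈ A), ?_, ?_⟩
    · have himg : (Finset.univ.filter (fun i => v i ∈ A)).image v = A := by
        apply Finset.Subset.antisymm
        · intro x hx
          rcases Finset.mem_image.mp hx with ⟨i, hi, rfl⟩
          exact (Finset.mem_filter.mp hi).2
        · intro x hx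
          have hxW : x ∈ W := hSW (hAS hx)
          rw [hWdef] at hxW
          rcases Finset.mem_image.mp hxW with ⟨i, _, rfl⟩
          exact Finset.mem_image.mpr ⟨i, Finset.mem_filter.mpr ⟨Finset.mem_univ i, hx⟩, rfl⟩
      have hcardeq := Finset.card_image_of_injective
        (Finset.univ.filter (fun i => v i ∈ A)) hv
      rw [himg] at hcardeq
      omega
    · intro i hi j hj _
      exact hSstb _ (hAS (Finset.mem_filter.mp hi).2) _ (hAS (Finset.mem_filter.mp hj).2)
  · exfalso
    push_neg at hwin
    set T := t ^ (s - 1) with hTdef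
    have hT1 : 1 ≤ T := Nat.one_le_pow _ _ (by omega)
    -- the attachment sets
    have hAvne : ∀ x ∈ W \ S, (S.filter (fun y => G.Adj x y)).Nonempty := by
      intro x hx
      rw [Finset.mem_sdiff] at hx
      by_contra hne
      rw [Finset.not_nonempty_iff_eq_empty] at hne
      have hstb : ∀ a ∈ insert x S, ∀ b ∈ insert x S, ¬ G.Adj a b := by
        intro a ha b hb
        by_cases hax : a = x <;> by_cases hbx : b = x
        · subst hax; subst hbx; exact G.irrefl
        · subst hax
          have hbS : b ∈ S := by
            rcases Finset.mem_insert.mp hb with h | h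
            · exact absurd h hbx
            · exact h
          intro h
          have hmem : b ∈ S.filter (fun y => G.Adj a y) := Finset.mem_filter.mpr ⟨hbS, h⟩
          rw [hne] at hmem
          exact absurd hmem (Finset.notMem_empty _)
        · subst hbx
          have haS : a ∈ S := by
            rcases Finset.mem_insert.mp ha with h | h
            · exact absurd h hax
            · exact h
          intro h
          have hmem : a ∈ S.filter (fun y => G.Adj b y) := Finset.mem_filter.mpr ⟨haS, h.symm⟩
          rw [hne] at hmem
          exact absurd hmem (Finset.notMem_empty _)
        · have haS : a ∈ S := by
            rcases Finset.mem_insert.mp ha with h | h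
            · exact absurd h hax
            · exact h
          have hbS : b ∈ S := by
            rcases Finset.mem_insert.mp hb with h | h
            · exact absurd h hbx
            · exact h
          exact hSstb a haS b hbS
      have hsub : insert x S ⊆ W := Finset.insert_subset hx.1 hSW
      have := hmax _ hsub hstb
      rw [Finset.card_insert_of_notMem hx.2] at this
      omega
    -- choose the class of each vertex outside S
    have hex : ∀ x : V, ∃ B : Finset V, x ∈ W \ S →
        B ⊆ S ∧ B.Nonempty ∧ B.card ≤ s ∧ (∀ b ∈ B, G.Adj x b) ∧
          (B.card = s ∨ B = S.filter (fun y => G.Adj x y)) := by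
      intro x
      by_cases hx : x ∈ W \ S
      · by_cases hcard : (S.filter (fun y => G.Adj x y)).card ≤ s
        · exact ⟨S.filter (fun y => G.Adj x y), fun _ =>
            ⟨Finset.filter_subset _ _, hAvne x hx, hcard,
              fun b hb => (Finset.mem_filter.mp hb).2, Or.inr rfl⟩⟩
        · obtain ⟨B, hBA, hBcard⟩ :=
            Finset.exists_subset_card_eq (le_of_lt (lt_of_not_ge hcard))
          refine ⟨B, fun _ => ⟨hBA.trans (Finset.filter_subset _ _),
            Finset.card_pos.mp (by omega), le_of_eq hBcard,
            fun b hb => (Finset.mem_filter.mp (hBA hb)).2, Or.inl hBcard⟩⟩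
      · exact ⟨∅, fun h => absurd h hx⟩
    choose c hc using hex
    set classes := S.powerset.filter (fun B => B.Nonempty ∧ B.card ≤ s) with hclsdef
    have hcmem : ∀ x ∈ W \ S, c x ∈ classes := by
      intro x hx
      obtain ⟨h1, h2, h3, _, _⟩ := hc x hx
      rw [hclsdef, Finset.mem_filter, Finset.mem_powerset]
      exact ⟨h1, h2, h3⟩
    have hsplitcard : (W \ S).card
        = ∑ B ∈ classes, ((W \ S).filter (fun x => c x = B)).card :=
      Finset.card_eq_sum_card_fiberwise hcmem
    -- fiber bounds
    have hfiber : ∀ B ∈ classes, ((W \ S).filter (fun x => c x = B)).card ≤ T - 1 := by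
      intro B hB
      rw [hclsdef, Finset.mem_filter, Finset.mem_powerset] at hB
      obtain ⟨hBS, hBne, hBs⟩ := hB
      set F := (W \ S).filter (fun x => c x = B) with hFdef
      by_contra hbig'
      have hFcard : T ≤ F.card := by omega
      have hnoclq : ¬ ∃ K : Finset V, K ⊆ F ∧ G.IsNClique t K := by
        rintro ⟨K, _, hK⟩; exact hclique ⟨K, hK⟩
      have hFadj : ∀ x ∈ F, ∀ b ∈ B, G.Adj x b := by
        intro x hxF b hb
        rw [hFdef, Finset.mem_filter] at hxF
        obtain ⟨hxWS, hcx⟩ := hxF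
        obtain ⟨_, _, _, h4, _⟩ := hc x hxWS
        rw [hcx] at h4
        exact h4 b hb
      rcases eq_or_lt_of_le hBs with hBeq | hBlt
      · -- |B| = s : F is inside the common neighborhood of the stable set B
        have hram := stmt19_ramsey G (s + t) s t F le_rfl (by
          have h : s + t - 2 = t - 1 + (s - 1) := by omega
          rw [h]
          exact le_trans (stmt19_choose_le t ht (s - 1)) hFcard) hnoclq
        obtain ⟨A, hAF, hAcard, hAstb⟩ := hram
        apply hKss
        refine ⟨A, B, hAcard, hBeq, ?_, ?_, hAstb, ?_⟩
        · rw [Finset.disjoint_left]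
          intro x hxA hxB
          exact G.irrefl (hFadj x (hAF hxA) x hxB)
        · intro a ha b hb
          exact hFadj a (hAF ha) b hb
        · intro b hb b' hb'
          exact hSstb b (hBS hb) b' (hBS hb')
      · -- |B| < s : F has no stable set of size |B| + 1
        have hAveq : ∀ x ∈ F, S.filter (fun y => G.Adj x y) = B := by
          intro x hxF
          rw [hFdef, Finset.mem_filter] at hxF
          obtain ⟨hxWS, hcx⟩ := hxF
          obtain ⟨_, _, _, _, h5⟩ := hc x hxWS
          rcases h5 with h5 | h5
          · rw [hcx] at h5; omega
          · rw [← hcx, h5]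
        have hram := stmt19_ramsey G (B.card + 1 + t) (B.card + 1) t F le_rfl (by
          have h : B.card + 1 + t - 2 = t - 1 + B.card := by omega
          have h' : B.card + 1 - 1 = B.card := by omega
          rw [h, h']
          calc Nat.choose (t - 1 + B.card) B.card ≤ t ^ B.card := stmt19_choose_le t ht _
            _ ≤ T := Nat.pow_le_pow_right (by omega) (by omega)
            _ ≤ F.card := hFcard) hnoclq
        obtain ⟨X, hXF, hXcard, hXstb⟩ := hram
        -- build a larger stable set (S \ B) ∪ X
        have hXWS : X ⊆ W \ S := hXF.trans (by rw [hFdef]; exact Finset.filter_subset _ _)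
        have hdisj : Disjoint (S \ B) X := by
          rw [Finset.disjoint_left]
          intro x hxSB hxX
          exact (Finset.mem_sdiff.mp (hXWS hxX)).2 (Finset.mem_sdiff.mp hxSB).1
        have hstb : ∀ a ∈ (S \ B) ∪ X, ∀ b ∈ (S \ B) ∪ X, ¬ G.Adj a b := by
          intro a ha b hb
          rcases Finset.mem_union.mp ha with ha' | ha' <;>
            rcases Finset.mem_union.mp hb with hb' | hb'
          · exact hSstb a (Finset.mem_sdiff.mp ha').1 b (Finset.mem_sdiff.mp hb').1
          · intro h
            have hBb := hAveq b (hXF hb')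
            have : a ∈ S.filter (fun y => G.Adj b y) :=
              Finset.mem_filter.mpr ⟨(Finset.mem_sdiff.mp ha').1, h.symm⟩
            rw [hBb] at this
            exact (Finset.mem_sdiff.mp ha').2 this
          · intro h
            have hBa := hAveq a (hXF ha')
            have : b ∈ S.filter (fun y => G.Adj a y) :=
              Finset.mem_filter.mpr ⟨(Finset.mem_sdiff.mp hb').1, h⟩
            rw [hBa] at this
            exact (Finset.mem_sdiff.mp hb').2 this
          · exact hXstb a ha' b hb'
        have hsub : (S \ B) ∪ X ⊆ W := by
          intro x hx
          rcases Finset.mem_union.mp hx with hx' | hx'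
          · exact hSW (Finset.mem_sdiff.mp hx').1
          · exact (Finset.mem_sdiff.mp (hXWS hx')).1
        have hcards := hmax _ hsub hstb
        rw [Finset.card_union_of_disjoint hdisj, Finset.card_sdiff_of_subset hBS, hXcard] at hcards
        have hBcard_le : B.card ≤ S.card := Finset.card_le_card hBS
        omega
    -- bound the number of classes
    have hclassescard : classes.card ≤ (S.card + 1) ^ s - 1 := by
      have hsubset : classes ⊆ (Finset.Icc 1 s).biUnion (fun j => S.powersetCard j) := by
        intro B hB
        rw [hclsdef, Finset.mem_filter, Finset.mem_powerset] at hB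
        obtain ⟨hBS, hBne, hBs⟩ := hB
        rw [Finset.mem_biUnion]
        exact ⟨B.card, Finset.mem_Icc.mpr ⟨Finset.card_pos.mpr hBne, hBs⟩,
          Finset.mem_powersetCard.mpr ⟨hBS, rfl⟩⟩
      calc classes.card ≤ ((Finset.Icc 1 s).biUnion (fun j => S.powersetCard j)).card :=
            Finset.card_le_card hsubset
        _ ≤ ∑ j ∈ Finset.Icc 1 s, (S.powersetCard j).card := Finset.card_biUnion_le
        _ = ∑ j ∈ Finset.Icc 1 s, Nat.choose S.card j := by
            apply Finset.sum_congr rfl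
            intro j _
            exact Finset.card_powersetCard j S
        _ ≤ (S.card + 1) ^ s - 1 := stmt19_sum_choose S.card s hs
    -- combine everything
    have hsum : (W \ S).card ≤ classes.card * (T - 1) := by
      rw [hsplitcard]
      have := Finset.sum_le_card_nsmul classes
        (fun B => ((W \ S).filter (fun x => c x = B)).card) (T - 1) hfiber
      simpa [smul_eq_mul] using this
    have hNsplit : N = S.card + (W \ S).card := by
      have h1 := Finset.card_sdiff_of_subset hSW
      have h2 := Finset.card_le_card hSW
      omega
    have hclasses2 : classes.card ≤ α ^ s - 1 := by
      have h1 : (S.card + 1) ^ s ≤ α ^ s := Nat.pow_le_pow_left (by omega) _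
      omega
    have hfin : N ≤ (α - 1) + (α ^ s - 1) * (T - 1) := by
      have h1 : classes.card * (T - 1) ≤ (α ^ s - 1) * (T - 1) :=
        Nat.mul_le_mul_right _ hclasses2
      omega
    -- final arithmetic contradiction
    obtain ⟨A', hA'⟩ : ∃ A', α ^ s = A' + 1 :=
      ⟨α ^ s - 1, by have := Nat.one_le_pow s α (by omega); omega⟩
    obtain ⟨T', hT'⟩ : ∃ T', T = T' + 1 := ⟨T - 1, by omega⟩
    have hαA : α ≤ A' + 1 := by
      rw [← hA']
      exact Nat.le_self_pow (by omega) α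
    have hexp : (A' + 1) * (T' + 1) = A' * T' + A' + T' + 1 := by ring
    rw [hA', hT'] at hbig hfin
    simp only [Nat.add_sub_cancel] at hfin
    omega
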